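/- Let 1 ≤ d < n be integers, let P ∈ ℝ^{d×n} have invertible leading d×d block P_I, set Q := P_I^{-1} P_II, and let α ≥ β ≥ 0, μ ∈ [0,α], ν ∈ [0,β]. Then there exists a constant C > 0, independent of K, L and of the coefficient family, such that for all positive integers K, L and every family c : ℤ^n → ℂ, (Σ_{k ∈ ℤ^n ∖ 𝒦_{K,L}} (1 + ‖k_I + Q k_II‖^{2μ} + ‖k_II‖^{2ν}) |c_k|²)^{1/2} ≤ C [ K^{−α}(K^{μ}+L^{ν}) (Σ_{k∈ℤ^n} (1+‖P k‖^{2α})|c_k|²)^{1/2} + L^{−β}(K^{μ}+L^{ν}) (Σ_{k∈ℤ^n} (1+‖k‖^{2β})|c_k|²)^{1/2} ]. -/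

import Mathlib

set_option maxHeartbeats 1000000


open scoped ENNReal

/-- Euclidean norm of a vector in `ℝ^m`. -/
noncomputable def euclNorm {m : ℕ} (x : Fin m → ℝ) : ℝ :=
  ‖(EuclideanSpace.equiv (Fin m) ℝ).symm x‖

/-- Mixed weight `‖k_I + Q k_II‖^(2α) + ‖k_II‖^(2β)` (real powers, `0⁰ = 1`). -/
noncomputable def wMix (d m : ℕ) (Q : Matrix (Fin d) (Fin m) ℝ) (α β : ℝ)
    (k : Fin (d + m) → ℤ) : ℝ :=
  euclNorm ((fun i => (k (Fin.castAdd m i) : ℝ)) +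
      Q.mulVec fun j => (k (Fin.natAdd d j) : ℝ)) ^ (2 * α) +
    euclNorm (fun j => (k (Fin.natAdd d j) : ℝ)) ^ (2 * β)

/-- Weight `‖P k‖^(2α)`. -/
noncomputable def wP (d m : ℕ) (P : Matrix (Fin d) (Fin (d + m)) ℝ) (α : ℝ)
    (k : Fin (d + m) → ℤ) : ℝ :=
  euclNorm (P.mulVec fun i => (k i : ℝ)) ^ (2 * α)

/-- Weight `‖k‖^(2β)`. -/
noncomputable def wFull (d m : ℕ) (β : ℝ) (k : Fin (d + m) → ℤ) : ℝ :=
  euclNorm (fun i => (k i : ℝ)) ^ (2 * β)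

/-- Membership in the parallelogram index set `𝒦_{K,L}`:
each component of `k_I + Q k_II` lies in `[-K, K)` and each component of `k_II` in `[-L, L)`. -/
def memK (d m : ℕ) (Q : Matrix (Fin d) (Fin m) ℝ) (K L : ℕ) (k : Fin (d + m) → ℤ) : Prop :=
  (∀ i : Fin d,
      -(K : ℝ) ≤ (k (Fin.castAdd m i) : ℝ) + Q.mulVec (fun j => (k (Fin.natAdd d j) : ℝ)) i ∧
      (k (Fin.castAdd m i) : ℝ) + Q.mulVec (fun j => (k (Fin.natAdd d j) : ℝ)) i < (K : ℝ)) ∧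
  (∀ j : Fin m, -(L : ℤ) ≤ k (Fin.natAdd d j) ∧ k (Fin.natAdd d j) < (L : ℤ))

lemma euclNorm_eq {n : ℕ} (x : Fin n → ℝ) :
    euclNorm x = Real.sqrt (∑ i, x i ^ 2) := by
  rw [euclNorm, EuclideanSpace.norm_eq]
  simp [Real.norm_eq_abs, sq_abs]

lemma euclNorm_nonneg {n : ℕ} (x : Fin n → ℝ) : 0 ≤ euclNorm x := norm_nonneg _

lemma abs_le_euclNorm {n : ℕ} (x : Fin n → ℝ) (i : Fin n) : |x i| ≤ euclNorm x := by
  rw [euclNorm_eq, ← Real.sqrt_sq_eq_abs]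
  exact Real.sqrt_le_sqrt (Finset.single_le_sum (fun j _ => sq_nonneg (x j)) (Finset.mem_univ i))

lemma euclNorm_tail_le {d m : ℕ} (x : Fin (d + m) → ℝ) :
    euclNorm (fun j => x (Fin.natAdd d j)) ≤ euclNorm x := by
  rw [euclNorm_eq, euclNorm_eq]
  apply Real.sqrt_le_sqrt
  rw [Fin.sum_univ_add]
  have : 0 ≤ ∑ i : Fin d, x (Fin.castAdd m i) ^ 2 :=
    Finset.sum_nonneg fun j _ => sq_nonneg _
  linarith

lemma exists_mulVec_bound {d : ℕ} (A : Matrix (Fin d) (Fin d) ℝ) :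
    ∃ c : ℝ, 1 ≤ c ∧ ∀ y : Fin d → ℝ, euclNorm (A.mulVec y) ≤ c * euclNorm y := by
  set f := LinearMap.toContinuousLinearMap (Matrix.toEuclideanLin A) with hf
  refine ⟨‖f‖ + 1, by have := norm_nonneg f; linarith, fun y => ?_⟩
  have h1 : euclNorm (A.mulVec y) = ‖f ((WithLp.equiv 2 (Fin d → ℝ)).symm y)‖ := by
    simp only [hf, LinearMap.coe_toContinuousLinearMap']
    rw [WithLp.equiv_symm_apply, Matrix.toEuclideanLin_apply_piLp_toLp]
    rfl
  have h2 : euclNorm y = ‖(WithLp.equiv 2 (Fin d → ℝ)).symm y‖ := rfl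
  rw [h1, h2]
  calc ‖f ((WithLp.equiv 2 (Fin d → ℝ)).symm y)‖
      ≤ ‖f‖ * ‖(WithLp.equiv 2 (Fin d → ℝ)).symm y‖ := f.le_opNorm _
    _ ≤ (‖f‖ + 1) * ‖(WithLp.equiv 2 (Fin d → ℝ)).symm y‖ := by
        apply mul_le_mul_of_nonneg_right (by linarith) (norm_nonneg _)

lemma aux_up (x X e E Z M : ℝ) (hX : 1 ≤ X) (hx : X ≤ x) (heE : e ≤ E)
    (hZ : 0 ≤ Z) (hM : 0 ≤ M) (hxZ : x ^ (2 * E) ≤ M * (1 + Z)) :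
    x ^ (2 * e) ≤ M * ((X ^ e) ^ 2 * (X ^ (-(2 * E)) * (1 + Z))) := by
  have hX0 : (0:ℝ) < X := lt_of_lt_of_le one_pos hX
  have hx0 : (0:ℝ) < x := lt_of_lt_of_le hX0 hx
  have h1 : x ^ (2 * e) = x ^ (2 * E) * x ^ (2 * e - 2 * E) := by
    rw [← Real.rpow_add hx0]; ring_nf
  have h2 : x ^ (2 * e - 2 * E) ≤ X ^ (2 * e - 2 * E) :=
    Real.rpow_le_rpow_of_nonpos hX0 hx (by linarith)
  have h3 : X ^ (2 * e - 2 * E) = (X ^ e) ^ 2 * X ^ (-(2 * E)) := by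
    rw [sq, ← Real.rpow_add hX0, ← Real.rpow_add hX0]; ring_nf
  have h5 : (0:ℝ) ≤ x ^ (2 * e - 2 * E) := Real.rpow_nonneg hx0.le _
  calc x ^ (2 * e) = x ^ (2 * E) * x ^ (2 * e - 2 * E) := h1
    _ ≤ (M * (1 + Z)) * X ^ (2 * e - 2 * E) := by
        apply mul_le_mul hxZ h2 h5 (by positivity)
    _ = M * ((X ^ e) ^ 2 * (X ^ (-(2 * E)) * (1 + Z))) := by rw [h3]; ring

lemma aux_low (x X E Z M : ℝ) (hX : 1 ≤ X) (hx : X ≤ x) (hE : 0 ≤ E)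
    (hxZ : x ^ (2 * E) ≤ M * (1 + Z)) :
    1 ≤ M * (X ^ (-(2 * E)) * (1 + Z)) := by
  have hX0 : (0:ℝ) < X := lt_of_lt_of_le one_pos hX
  have h1 : X ^ (2 * E) ≤ x ^ (2 * E) := Real.rpow_le_rpow hX0.le hx (by linarith)
  have h2 : X ^ (-(2 * E)) * X ^ (2 * E) = 1 := by
    rw [← Real.rpow_add hX0]; norm_num
  have h3 : (0:ℝ) ≤ X ^ (-(2 * E)) := Real.rpow_nonneg hX0.le _
  calc (1:ℝ) = X ^ (-(2 * E)) * X ^ (2 * E) := h2.symm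
    _ ≤ X ^ (-(2 * E)) * (M * (1 + Z)) :=
        mul_le_mul_of_nonneg_left (le_trans h1 hxZ) h3
    _ = M * (X ^ (-(2 * E)) * (1 + Z)) := by ring

/-- Core casework inequality. -/
lemma key_ineq (α β μ ν a b Kr Lr Zp Zf M : ℝ)
    (hβ : 0 ≤ β) (hαβ : β ≤ α) (hμ0 : 0 ≤ μ) (hμ : μ ≤ α) (hν0 : 0 ≤ ν) (hν : ν ≤ β)
    (hK : 1 ≤ Kr) (hL : 1 ≤ Lr) (hM : 1 ≤ M)
    (ha : 0 ≤ a) (hb : 0 ≤ b) (hZp : 0 ≤ Zp) (hZf : 0 ≤ Zf)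
    (haZ : a ^ (2 * α) ≤ M * (1 + Zp)) (hbZ : b ^ (2 * β) ≤ 1 * (1 + Zf))
    (hcase : Kr ≤ a ∨ Lr ≤ b) :
    1 + (a ^ (2 * μ) + b ^ (2 * ν)) ≤
      3 * M * (Kr ^ μ + Lr ^ ν) ^ 2 *
        (Kr ^ (-(2 * α)) * (1 + Zp) + Lr ^ (-(2 * β)) * (1 + Zf)) := by
  have hα : 0 ≤ α := le_trans hβ hαβ
  have hK0 : (0:ℝ) < Kr := lt_of_lt_of_le one_pos hK
  have hL0 : (0:ℝ) < Lr := lt_of_lt_of_le one_pos hL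
  have hKμ : 1 ≤ Kr ^ μ := by
    have := Real.rpow_le_rpow_of_exponent_le hK hμ0
    rwa [Real.rpow_zero] at this
  have hLν : 1 ≤ Lr ^ ν := by
    have := Real.rpow_le_rpow_of_exponent_le hL hν0
    rwa [Real.rpow_zero] at this
  have hKμ0 : 0 ≤ Kr ^ μ := by linarith
  have hLν0 : 0 ≤ Lr ^ ν := by linarith
  obtain ⟨S, hS⟩ : ∃ S : ℝ, Kr ^ μ + Lr ^ ν = S := ⟨_, rfl⟩
  rw [hS]
  have hS1 : 1 ≤ S := by rw [← hS]; linarith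
  have hS0 : 0 ≤ S := le_trans zero_le_one hS1
  have hS2 : 1 ≤ S ^ 2 := by have hS0' : 0 ≤ S := le_trans zero_le_one hS1; nlinarith
  have hS20 : 0 ≤ S ^ 2 := by positivity
  obtain ⟨A1, hA1def⟩ : ∃ A : ℝ, Kr ^ (-(2 * α)) * (1 + Zp) = A := ⟨_, rfl⟩
  obtain ⟨A2, hA2def⟩ : ∃ A : ℝ, Lr ^ (-(2 * β)) * (1 + Zf) = A := ⟨_, rfl⟩
  rw [hA1def, hA2def]
  have hA1 : 0 ≤ A1 := by rw [← hA1def]; exact mul_nonneg (Real.rpow_nonneg hK0.le _) (by linarith)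
  have hA2 : 0 ≤ A2 := by rw [← hA2def]; exact mul_nonneg (Real.rpow_nonneg hL0.le _) (by linarith)
  have hM0 : 0 ≤ M := by linarith
  have hKμS : Kr ^ μ ≤ S := by rw [← hS]; linarith
  have hLνS : Lr ^ ν ≤ S := by rw [← hS]; linarith
  have hKμ2 : (Kr ^ μ) ^ 2 ≤ S ^ 2 := by nlinarith
  have hLν2 : (Lr ^ ν) ^ 2 ≤ S ^ 2 := by nlinarith
  obtain ⟨P1, hP1def⟩ : ∃ P : ℝ, M * (S ^ 2 * A1) = P := ⟨_, rfl⟩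
  obtain ⟨P2, hP2def⟩ : ∃ P : ℝ, M * (S ^ 2 * A2) = P := ⟨_, rfl⟩
  have hP1n : 0 ≤ P1 := by rw [← hP1def]; positivity
  have hP2n : 0 ≤ P2 := by rw [← hP2def]; positivity
  -- a-term when a is large
  have haBig : Kr ≤ a → a ^ (2 * μ) ≤ P1 := by
    intro h
    have h1 := aux_up a Kr μ α Zp M hK h hμ hZp hM0 haZ
    rw [hA1def] at h1
    have h2 : (Kr ^ μ) ^ 2 * A1 ≤ S ^ 2 * A1 := mul_le_mul_of_nonneg_right hKμ2 hA1
    have h3 : M * ((Kr ^ μ) ^ 2 * A1) ≤ M * (S ^ 2 * A1) :=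
      mul_le_mul_of_nonneg_left h2 hM0
    rw [← hP1def]; linarith
  have hbBig : Lr ≤ b → b ^ (2 * ν) ≤ P2 := by
    intro h
    have h1 := aux_up b Lr ν β Zf 1 hL h hν hZf zero_le_one hbZ
    rw [hA2def, one_mul] at h1
    have h2 : (Lr ^ ν) ^ 2 * A2 ≤ S ^ 2 * A2 := mul_le_mul_of_nonneg_right hLν2 hA2
    have h3 : 1 * (S ^ 2 * A2) ≤ M * (S ^ 2 * A2) :=
      mul_le_mul_of_nonneg_right hM (mul_nonneg hS20 hA2)
    rw [← hP2def]; linarith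
  have haLow : Kr ≤ a → 1 ≤ M * A1 := fun h => by
    have := aux_low a Kr α Zp M hK h hα haZ
    rwa [hA1def] at this
  have hbLow : Lr ≤ b → 1 ≤ A2 := fun h => by
    have := aux_low b Lr β Zf 1 hL h hβ hbZ
    rw [hA2def, one_mul] at this; exact this
  have hP1big : 1 ≤ M * A1 → S ^ 2 ≤ P1 := by
    intro h
    have h1 : S ^ 2 * 1 ≤ S ^ 2 * (M * A1) := mul_le_mul_of_nonneg_left h hS20
    rw [← hP1def]; linarith
  have hP2big : 1 ≤ A2 → S ^ 2 ≤ P2 := by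
    intro h
    have h1 : S ^ 2 * 1 ≤ S ^ 2 * A2 := mul_le_mul_of_nonneg_left h hS20
    have h2 : 1 * (S ^ 2 * A2) ≤ M * (S ^ 2 * A2) :=
      mul_le_mul_of_nonneg_right hM (mul_nonneg hS20 hA2)
    rw [← hP2def]; linarith
  have haSmall : a ≤ Kr → a ^ (2 * μ) ≤ S ^ 2 := by
    intro h
    have h1 : a ^ (2 * μ) ≤ Kr ^ (2 * μ) := Real.rpow_le_rpow ha h (by linarith)
    have h2 : Kr ^ (2 * μ) = (Kr ^ μ) ^ 2 := by
      rw [sq, ← Real.rpow_add hK0]; ring_nf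
    linarith
  have hbSmall : b ≤ Lr → b ^ (2 * ν) ≤ S ^ 2 := by
    intro h
    have h1 : b ^ (2 * ν) ≤ Lr ^ (2 * ν) := Real.rpow_le_rpow hb h (by linarith)
    have h2 : Lr ^ (2 * ν) = (Lr ^ ν) ^ 2 := by
      rw [sq, ← Real.rpow_add hL0]; ring_nf
    linarith
  have goal3 : 1 + (a ^ (2*μ) + b ^ (2*ν)) ≤ 3 * (P1 + P2) := by
    rcases hcase with h | h
    · have hMA1 := haLow h
      have hSP1 := hP1big hMA1
      have t1 : 1 ≤ P1 := le_trans hS2 hSP1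
      have t2 : a ^ (2*μ) ≤ P1 := haBig h
      have t3 : b ^ (2*ν) ≤ P1 + P2 := by
        rcases le_total Lr b with h' | h'
        · linarith [hbBig h']
        · linarith [hbSmall h']
      linarith
    · have hA2' := hbLow h
      have hSP2 := hP2big hA2'
      have t1 : 1 ≤ P2 := le_trans hS2 hSP2
      have t2 : b ^ (2*ν) ≤ P2 := hbBig h
      have t3 : a ^ (2*μ) ≤ P1 + P2 := by
        rcases le_total Kr a with h' | h'
        · linarith [haBig h']
        · linarith [haSmall h']
      linarith
  calc 1 + (a ^ (2*μ) + b ^ (2*ν)) ≤ 3 * (P1 + P2) := goal3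
    _ = 3 * M * S ^ 2 * (A1 + A2) := by rw [← hP1def, ← hP2def]; ring

lemma pointwise_bound (d m : ℕ)
    (P : Matrix (Fin d) (Fin (d + m)) ℝ)
    (PI : Matrix (Fin d) (Fin d) ℝ) (hPI : PI = P.submatrix id (Fin.castAdd m))
    (PII : Matrix (Fin d) (Fin m) ℝ) (hPII : PII = P.submatrix id (Fin.natAdd d))
    (hinv : IsUnit PI)
    (Q : Matrix (Fin d) (Fin m) ℝ) (hQ : Q = PI⁻¹ * PII)
    (α β μ ν : ℝ) (hβ : 0 ≤ β) (hαβ : β ≤ α) (hμ0 : 0 ≤ μ) (hμ : μ ≤ α)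
    (hν0 : 0 ≤ ν) (hν : ν ≤ β)
    (c₀ M : ℝ) (hc₀1 : 1 ≤ c₀)
    (hc₀ : ∀ y : Fin d → ℝ, euclNorm ((PI⁻¹).mulVec y) ≤ c₀ * euclNorm y)
    (hMdef : c₀ ^ (2 * α) = M) (hM1 : 1 ≤ M)
    (K L : ℕ) (hK1 : (1:ℝ) ≤ (K:ℝ)) (hL1 : (1:ℝ) ≤ (L:ℝ))
    (k : Fin (d + m) → ℤ) (hk : ¬ memK d m Q K L k) :
    1 + wMix d m Q μ ν k ≤
      3 * M * ((K:ℝ) ^ μ + (L:ℝ) ^ ν) ^ 2 *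
        ((K:ℝ) ^ (-(2 * α)) * (1 + wP d m P α k) +
          (L:ℝ) ^ (-(2 * β)) * (1 + wFull d m β k)) := by
  have hα : 0 ≤ α := le_trans hβ hαβ
  have hdet : IsUnit PI.det := (Matrix.isUnit_iff_isUnit_det PI).mp hinv
  have hPIQ : PI * Q = PII := by
    rw [hQ, ← Matrix.mul_assoc, Matrix.mul_nonsing_inv _ hdet, Matrix.one_mul]
  have hsplit : P.mulVec (fun i => (k i : ℝ)) =
      PI.mulVec (fun i => (k (Fin.castAdd m i) : ℝ)) +
        PII.mulVec (fun j => (k (Fin.natAdd d j) : ℝ)) := by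
    funext i
    simp [Matrix.mulVec, dotProduct, hPI, hPII, Fin.sum_univ_add]
  have hPx : PI.mulVec ((fun i => (k (Fin.castAdd m i) : ℝ)) +
      Q.mulVec (fun j => (k (Fin.natAdd d j) : ℝ))) = P.mulVec (fun i => (k i : ℝ)) := by
    rw [Matrix.mulVec_add, Matrix.mulVec_mulVec, hPIQ, hsplit]
  have hxr : (fun i => (k (Fin.castAdd m i) : ℝ)) +
      Q.mulVec (fun j => (k (Fin.natAdd d j) : ℝ)) =
      PI⁻¹.mulVec (P.mulVec (fun i => (k i : ℝ))) := by
    rw [← hPx, Matrix.mulVec_mulVec, Matrix.nonsing_inv_mul _ hdet, Matrix.one_mulVec]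
  obtain ⟨a, hadef⟩ : ∃ a : ℝ, euclNorm ((fun i => (k (Fin.castAdd m i) : ℝ)) +
      Q.mulVec (fun j => (k (Fin.natAdd d j) : ℝ))) = a := ⟨_, rfl⟩
  obtain ⟨b, hbdef⟩ : ∃ b : ℝ, euclNorm (fun j => (k (Fin.natAdd d j) : ℝ)) = b := ⟨_, rfl⟩
  have ha0 : 0 ≤ a := hadef ▸ euclNorm_nonneg _
  have hb0 : 0 ≤ b := hbdef ▸ euclNorm_nonneg _
  have hwmix : wMix d m Q μ ν k = a ^ (2 * μ) + b ^ (2 * ν) := by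
    rw [wMix, hadef, hbdef]
  have hZp0 : 0 ≤ wP d m P α k := Real.rpow_nonneg (euclNorm_nonneg _) _
  have hZf0 : 0 ≤ wFull d m β k := Real.rpow_nonneg (euclNorm_nonneg _) _
  have haZ : a ^ (2 * α) ≤ M * (1 + wP d m P α k) := by
    have hle : a ≤ c₀ * euclNorm (P.mulVec fun i => (k i : ℝ)) := by
      rw [← hadef, hxr]; exact hc₀ _
    have h1 : a ^ (2 * α) ≤ (c₀ * euclNorm (P.mulVec fun i => (k i : ℝ))) ^ (2 * α) :=
      Real.rpow_le_rpow ha0 hle (by linarith)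
    have h2 : (c₀ * euclNorm (P.mulVec fun i => (k i : ℝ))) ^ (2 * α) =
        M * wP d m P α k := by
      rw [Real.mul_rpow (by linarith) (euclNorm_nonneg _), hMdef, wP]
    have h3 : M * wP d m P α k ≤ M * (1 + wP d m P α k) :=
      mul_le_mul_of_nonneg_left (by linarith) (by linarith)
    linarith
  have hbZ : b ^ (2 * β) ≤ 1 * (1 + wFull d m β k) := by
    have hle : b ≤ euclNorm (fun i => (k i : ℝ)) := by
      rw [← hbdef]; exact euclNorm_tail_le (fun i => (k i : ℝ))
    have h1 : b ^ (2 * β) ≤ euclNorm (fun i => (k i : ℝ)) ^ (2 * β) :=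
      Real.rpow_le_rpow hb0 hle (by linarith)
    rw [wFull] at hZf0 ⊢
    linarith
  have hcase : (K:ℝ) ≤ a ∨ (L:ℝ) ≤ b := by
    rcases not_and_or.mp hk with h | h
    · left
      obtain ⟨i, hi⟩ := not_forall.mp h
      have habs : (K:ℝ) ≤ |((fun i => (k (Fin.castAdd m i) : ℝ)) +
          Q.mulVec (fun j => (k (Fin.natAdd d j) : ℝ))) i| := by
        have happ : ((fun i => (k (Fin.castAdd m i) : ℝ)) +
            Q.mulVec (fun j => (k (Fin.natAdd d j) : ℝ))) i =
            (k (Fin.castAdd m i) : ℝ) +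
              Q.mulVec (fun j => (k (Fin.natAdd d j) : ℝ)) i := rfl
        rw [happ]
        rcases not_and_or.mp hi with h1 | h2
        · push_neg at h1
          rw [abs_of_neg (by linarith)]
          linarith
        · push_neg at h2
          exact le_trans h2 (le_abs_self _)
      calc (K:ℝ) ≤ _ := habs
        _ ≤ a := by rw [← hadef]; exact abs_le_euclNorm _ i
    · right
      obtain ⟨j, hj⟩ := not_forall.mp h
      have habs : (L:ℝ) ≤ |(k (Fin.natAdd d j) : ℝ)| := by
        rcases not_and_or.mp hj with h1 | h2
        · push_neg at h1
          have hlt : (k (Fin.natAdd d j) : ℝ) < -(L:ℝ) := by exact_mod_cast h1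
          rw [abs_of_neg (by linarith)]
          linarith
        · push_neg at h2
          have hge : (L:ℝ) ≤ (k (Fin.natAdd d j) : ℝ) := by exact_mod_cast h2
          exact le_trans hge (le_abs_self _)
      calc (L:ℝ) ≤ _ := habs
        _ ≤ b := by rw [← hbdef]; exact abs_le_euclNorm (fun j => (k (Fin.natAdd d j) : ℝ)) j
  have hkey := key_ineq α β μ ν a b (K:ℝ) (L:ℝ) (wP d m P α k) (wFull d m β k) M
    hβ hαβ hμ0 hμ hν0 hν hK1 hL1 hM1 ha0 hb0 hZp0 hZf0 haZ hbZ hcase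
  rw [hwmix]
  exact hkey

/-- truncation error bound in the full norms
`‖u - P_{K,L}u‖_{μ,ν} ≤ C (K^{-α}(K^μ+L^ν) ‖u‖_α + L^{-β}(K^μ+L^ν) ‖U‖_{H^β})`. -/
theorem stmt6 (d m : ℕ) (hd : 1 ≤ d) (hm : 1 ≤ m)
    (P : Matrix (Fin d) (Fin (d + m)) ℝ)
    (PI : Matrix (Fin d) (Fin d) ℝ) (hPI : PI = P.submatrix id (Fin.castAdd m))
    (PII : Matrix (Fin d) (Fin m) ℝ) (hPII : PII = P.submatrix id (Fin.natAdd d))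
    (hinv : IsUnit PI)
    (Q : Matrix (Fin d) (Fin m) ℝ) (hQ : Q = PI⁻¹ * PII)
    (α β μ ν : ℝ) (hβ : 0 ≤ β) (hαβ : β ≤ α) (hμ0 : 0 ≤ μ) (hμ : μ ≤ α)
    (hν0 : 0 ≤ ν) (hν : ν ≤ β) :
    ∃ C : ℝ, 0 < C ∧ ∀ K L : ℕ, 0 < K → 0 < L → ∀ c : (Fin (d + m) → ℤ) → ℂ,
      (∑' k : {k : Fin (d + m) → ℤ // ¬ memK d m Q K L k},
          ENNReal.ofReal ((1 + wMix d m Q μ ν k.1) * ‖c k.1‖ ^ 2)) ^ ((1 : ℝ) / 2) ≤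
        ENNReal.ofReal (C * (K : ℝ) ^ (-α) * ((K : ℝ) ^ μ + (L : ℝ) ^ ν)) *
            (∑' k : Fin (d + m) → ℤ,
              ENNReal.ofReal ((1 + wP d m P α k) * ‖c k‖ ^ 2)) ^ ((1 : ℝ) / 2) +
          ENNReal.ofReal (C * (L : ℝ) ^ (-β) * ((K : ℝ) ^ μ + (L : ℝ) ^ ν)) *
            (∑' k : Fin (d + m) → ℤ,
              ENNReal.ofReal ((1 + wFull d m β k) * ‖c k‖ ^ 2)) ^ ((1 : ℝ) / 2) := by
  classical
  obtain ⟨c₀, hc₀1, hc₀⟩ := exists_mulVec_bound (PI⁻¹)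
  have hα : 0 ≤ α := le_trans hβ hαβ
  obtain ⟨M, hMdef⟩ : ∃ M : ℝ, c₀ ^ (2 * α) = M := ⟨_, rfl⟩
  have hM1 : 1 ≤ M := by
    rw [← hMdef]
    have := Real.rpow_le_rpow_of_exponent_le hc₀1 (by linarith : (0:ℝ) ≤ 2 * α)
    rwa [Real.rpow_zero] at this
  have hM0 : 0 ≤ M := by linarith
  refine ⟨Real.sqrt (3 * M), Real.sqrt_pos.mpr (by linarith), ?_⟩
  intro K L hK hL c
  set C := Real.sqrt (3 * M) with hCdef
  have hCsq : C ^ 2 = 3 * M := Real.sq_sqrt (by linarith)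
  have hC0 : 0 ≤ C := Real.sqrt_nonneg _
  have hK1 : (1:ℝ) ≤ (K:ℝ) := by exact_mod_cast hK
  have hL1 : (1:ℝ) ≤ (L:ℝ) := by exact_mod_cast hL
  have hK0 : (0:ℝ) < (K:ℝ) := by linarith
  have hL0 : (0:ℝ) < (L:ℝ) := by linarith
  set S := (K:ℝ) ^ μ + (L:ℝ) ^ ν with hSdef
  set C1 := C * (K:ℝ) ^ (-α) * S with hC1def
  set C2 := C * (L:ℝ) ^ (-β) * S with hC2def
  have hS0 : 0 ≤ S := by
    rw [hSdef]
    exact add_nonneg (Real.rpow_nonneg hK0.le _) (Real.rpow_nonneg hL0.le _)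
  have hC1_0 : 0 ≤ C1 := by
    rw [hC1def]
    exact mul_nonneg (mul_nonneg hC0 (Real.rpow_nonneg hK0.le _)) hS0
  have hC2_0 : 0 ≤ C2 := by
    rw [hC2def]
    exact mul_nonneg (mul_nonneg hC0 (Real.rpow_nonneg hL0.le _)) hS0
  have hC1sq : C1 ^ 2 = 3 * M * S ^ 2 * (K:ℝ) ^ (-(2 * α)) := by
    have h2 : ((K:ℝ) ^ (-α)) ^ 2 = (K:ℝ) ^ (-(2 * α)) := by
      rw [sq, ← Real.rpow_add hK0]; ring_nf
    rw [hC1def, mul_pow, mul_pow, hCsq, h2]; ring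
  have hC2sq : C2 ^ 2 = 3 * M * S ^ 2 * (L:ℝ) ^ (-(2 * β)) := by
    have h2 : ((L:ℝ) ^ (-β)) ^ 2 = (L:ℝ) ^ (-(2 * β)) := by
      rw [sq, ← Real.rpow_add hL0]; ring_nf
    rw [hC2def, mul_pow, mul_pow, hCsq, h2]; ring
  have hpt : ∀ k : Fin (d + m) → ℤ, ¬ memK d m Q K L k →
      1 + wMix d m Q μ ν k ≤
        C1 ^ 2 * (1 + wP d m P α k) + C2 ^ 2 * (1 + wFull d m β k) := by
    intro k hk
    calc 1 + wMix d m Q μ ν k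
        ≤ 3 * M * S ^ 2 *
            ((K:ℝ) ^ (-(2 * α)) * (1 + wP d m P α k) +
              (L:ℝ) ^ (-(2 * β)) * (1 + wFull d m β k)) := by
          rw [hSdef]
          exact pointwise_bound d m P PI hPI PII hPII hinv Q hQ α β μ ν hβ hαβ hμ0 hμ
            hν0 hν c₀ M hc₀1 hc₀ hMdef hM1 K L hK1 hL1 k hk
      _ = C1 ^ 2 * (1 + wP d m P α k) + C2 ^ 2 * (1 + wFull d m β k) := by
          rw [hC1sq, hC2sq]; ring
  -- ENNReal part
  set F1 : (Fin (d + m) → ℤ) → ℝ≥0∞ :=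
    fun k => ENNReal.ofReal ((1 + wP d m P α k) * ‖c k‖ ^ 2) with hF1def
  set F2 : (Fin (d + m) → ℤ) → ℝ≥0∞ :=
    fun k => ENNReal.ofReal ((1 + wFull d m β k) * ‖c k‖ ^ 2) with hF2def
  have hpt2 : ∀ k : {k : Fin (d + m) → ℤ // ¬ memK d m Q K L k},
      ENNReal.ofReal ((1 + wMix d m Q μ ν k.1) * ‖c k.1‖ ^ 2) ≤
        ENNReal.ofReal (C1 ^ 2) * F1 k.1 + ENNReal.ofReal (C2 ^ 2) * F2 k.1 := by
    intro k
    have hZp0 : 0 ≤ wP d m P α k.1 := Real.rpow_nonneg (euclNorm_nonneg _) _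
    have hZf0 : 0 ≤ wFull d m β k.1 := Real.rpow_nonneg (euclNorm_nonneg _) _
    have hn : 0 ≤ ‖c k.1‖ ^ 2 := sq_nonneg _
    have e1 : F1 k.1 = ENNReal.ofReal ((1 + wP d m P α k.1) * ‖c k.1‖ ^ 2) := rfl
    have e2 : F2 k.1 = ENNReal.ofReal ((1 + wFull d m β k.1) * ‖c k.1‖ ^ 2) := rfl
    rw [e1, e2, ← ENNReal.ofReal_mul (sq_nonneg C1), ← ENNReal.ofReal_mul (sq_nonneg C2),
      ← ENNReal.ofReal_add (mul_nonneg (sq_nonneg C1) (mul_nonneg (by linarith) hn))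
        (mul_nonneg (sq_nonneg C2) (mul_nonneg (by linarith) hn))]
    apply ENNReal.ofReal_le_ofReal
    have h1 := mul_le_mul_of_nonneg_right (hpt k.1 k.2) hn
    calc (1 + wMix d m Q μ ν k.1) * ‖c k.1‖ ^ 2
        ≤ (C1 ^ 2 * (1 + wP d m P α k.1) + C2 ^ 2 * (1 + wFull d m β k.1)) * ‖c k.1‖ ^ 2 := h1
      _ = C1 ^ 2 * ((1 + wP d m P α k.1) * ‖c k.1‖ ^ 2) +
          C2 ^ 2 * ((1 + wFull d m β k.1) * ‖c k.1‖ ^ 2) := by ring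
  have hsum : (∑' k : {k : Fin (d + m) → ℤ // ¬ memK d m Q K L k},
      ENNReal.ofReal ((1 + wMix d m Q μ ν k.1) * ‖c k.1‖ ^ 2)) ≤
      ENNReal.ofReal (C1 ^ 2) * (∑' k, F1 k) + ENNReal.ofReal (C2 ^ 2) * (∑' k, F2 k) := by
    calc (∑' k : {k : Fin (d + m) → ℤ // ¬ memK d m Q K L k},
        ENNReal.ofReal ((1 + wMix d m Q μ ν k.1) * ‖c k.1‖ ^ 2))
        ≤ ∑' k : {k : Fin (d + m) → ℤ // ¬ memK d m Q K L k},
            (ENNReal.ofReal (C1 ^ 2) * F1 k.1 + ENNReal.ofReal (C2 ^ 2) * F2 k.1) :=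
          ENNReal.tsum_le_tsum hpt2
      _ = (∑' k : {k : Fin (d + m) → ℤ // ¬ memK d m Q K L k},
            ENNReal.ofReal (C1 ^ 2) * F1 k.1) +
          (∑' k : {k : Fin (d + m) → ℤ // ¬ memK d m Q K L k},
            ENNReal.ofReal (C2 ^ 2) * F2 k.1) := ENNReal.tsum_add
      _ = ENNReal.ofReal (C1 ^ 2) *
            (∑' k : {k : Fin (d + m) → ℤ // ¬ memK d m Q K L k}, F1 k.1) +
          ENNReal.ofReal (C2 ^ 2) *
            (∑' k : {k : Fin (d + m) → ℤ // ¬ memK d m Q K L k}, F2 k.1) := by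
          rw [ENNReal.tsum_mul_left, ENNReal.tsum_mul_left]
      _ ≤ ENNReal.ofReal (C1 ^ 2) * (∑' k, F1 k) + ENNReal.ofReal (C2 ^ 2) * (∑' k, F2 k) := by
          gcongr
          · exact ENNReal.tsum_comp_le_tsum_of_injective Subtype.val_injective F1
          · exact ENNReal.tsum_comp_le_tsum_of_injective Subtype.val_injective F2
  have hhalf : (0:ℝ) ≤ 1 / 2 := by norm_num
  have sqrt_mul : ∀ (r : ℝ), 0 ≤ r → ∀ (T : ℝ≥0∞),
      (ENNReal.ofReal (r ^ 2) * T) ^ ((1:ℝ) / 2) =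
        ENNReal.ofReal r * T ^ ((1:ℝ) / 2) := by
    intro r hr T
    rw [ENNReal.ofReal_pow hr, ENNReal.mul_rpow_of_nonneg _ _ hhalf,
      ← ENNReal.rpow_natCast (ENNReal.ofReal r) 2, ← ENNReal.rpow_mul]
    norm_num
  calc (∑' k : {k : Fin (d + m) → ℤ // ¬ memK d m Q K L k},
      ENNReal.ofReal ((1 + wMix d m Q μ ν k.1) * ‖c k.1‖ ^ 2)) ^ ((1:ℝ) / 2)
      ≤ (ENNReal.ofReal (C1 ^ 2) * (∑' k, F1 k) +
          ENNReal.ofReal (C2 ^ 2) * (∑' k, F2 k)) ^ ((1:ℝ) / 2) :=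
        ENNReal.rpow_le_rpow hsum hhalf
    _ ≤ (ENNReal.ofReal (C1 ^ 2) * (∑' k, F1 k)) ^ ((1:ℝ) / 2) +
        (ENNReal.ofReal (C2 ^ 2) * (∑' k, F2 k)) ^ ((1:ℝ) / 2) :=
        ENNReal.rpow_add_le_add_rpow _ _ hhalf (by norm_num)
    _ = ENNReal.ofReal C1 * (∑' k, F1 k) ^ ((1:ℝ) / 2) +
        ENNReal.ofReal C2 * (∑' k, F2 k) ^ ((1:ℝ) / 2) := by
        rw [sqrt_mul C1 hC1_0, sqrt_mul C2 hC2_0]
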